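/- Let μ be an infinite cardinal. The product of at most 2^μ topological spaces, each containing a dense subset of cardinality at most μ, contains a dense subset of cardinality at most μ. -/
import Mathlib


universe u

open Cardinal Set

/-- **Engelking–Karłowicz density theorem.** Let `μ` be an infinite cardinal. The
product of at most `2 ^ μ` topological spaces, each of which contains a dense subset
of cardinality at most `μ`, contains a dense subset of cardinality at most `μ`. -/
theorem engelking_karlowicz_density (μ : Cardinal.{u}) (hμ : Cardinal.aleph0 ≤ μ)
    {ι : Type u} (X : ι → Type u) [∀ i, TopologicalSpace (X i)]
    (hι : Cardinal.mk ι ≤ 2 ^ μ)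
    (hd : ∀ i, ∃ s : Set (X i), Dense s ∧ Cardinal.mk s ≤ μ) :
    ∃ s : Set (∀ i, X i), Dense s ∧ Cardinal.mk s ≤ μ := by
  classical
  by_cases hne : Nonempty (∀ i, X i)
  case neg =>
    exact ⟨∅, fun x => absurd ⟨x⟩ hne, by simp⟩
  have hXne : ∀ i, Nonempty (X i) := fun i => ⟨hne.some i⟩
  set M := μ.out with hMdef
  have hmkM : #M = μ := Cardinal.mk_out μ
  have hMinf : Infinite M := by
    rw [Cardinal.infinite_iff, hmkM]; exact hμ
  have hMne : Nonempty M := inferInstance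
  -- dense-range functions from M
  have hf : ∀ i, ∃ f : M → X i, DenseRange f := by
    intro i
    obtain ⟨D, hD, hDle⟩ := hd i
    have hDne : Nonempty D := hD.nonempty.to_subtype
    obtain ⟨e⟩ : Nonempty (D ↪ M) := by
      rw [← Cardinal.le_def, hmkM]; exact hDle
    refine ⟨fun m => ((Function.invFun e m : D) : X i), ?_⟩
    have hsurj : Function.Surjective (Function.invFun e) :=
      Function.invFun_surjective e.injective
    have hr : Set.range (fun m => ((Function.invFun e m : D) : X i)) = D := by
      ext y
      constructor
      · rintro ⟨m, rfl⟩; exact (Function.invFun e m).2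
      · intro hy
        obtain ⟨m, hm⟩ := hsurj ⟨y, hy⟩
        exact ⟨m, by simp only [hm]⟩
    rw [DenseRange, hr]; exact hD
  choose f hfd using hf
  -- injection into sets of M
  obtain ⟨A⟩ : Nonempty (ι ↪ Set M) := by
    rw [← Cardinal.le_def, Cardinal.mk_set, hmkM]; exact hι
  -- separating points for distinct indices
  have hsep : ∀ i j : ι, i ≠ j → ∃ m : M, decide (m ∈ A i) ≠ decide (m ∈ A j) := by
    intro i j hij
    have : A i ≠ A j := fun h => hij (A.injective h)
    obtain ⟨m, hm⟩ := Set.symmDiff_nonempty.2 this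
    rcases Set.mem_symmDiff.1 hm with ⟨h1, h2⟩ | ⟨h1, h2⟩ <;>
      exact ⟨m, by simp [h1, h2]⟩
  choose t ht using fun (p : ι × ι) (h : p.1 ≠ p.2) => hsep p.1 p.2 h
  -- the index type for the dense family
  let Λ : Type u := Σ E : Finset M, ((E → Bool) → M)
  let s : Λ → ∀ i, X i := fun p i => f i (p.2 (fun m => decide ((m : M) ∈ A i)))
  refine ⟨Set.range s, ?_, ?_⟩
  · -- density
    rw [dense_iff_inter_open]
    rintro U hU ⟨x, hx⟩
    obtain ⟨I, u, h1, h2⟩ := isOpen_pi_iff.1 hU x hx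
    -- choose approximating parameters
    have hφ : ∀ i ∈ I, ∃ m : M, f i m ∈ u i := fun i hi =>
      (hfd i).exists_mem_open (h1 i hi).1 ⟨x i, (h1 i hi).2⟩
    let φ : ι → M := fun i => if h : ∃ m : M, f i m ∈ u i then h.choose else hMne.some
    have hφ' : ∀ i ∈ I, f i (φ i) ∈ u i := by
      intro i hi
      have h := hφ i hi
      simp only [φ, dif_pos h]
      exact h.choose_spec
    -- the finite separating set
    let tt : ι × ι → M := fun p => if h : p.1 ≠ p.2 then t p h else hMne.some
    let E : Finset M := (I ×ˢ I).image tt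
    -- patterns
    let pat : ι → (E → Bool) := fun i m => decide ((m : M) ∈ A i)
    have hpat : ∀ i ∈ I, ∀ j ∈ I, pat i = pat j → i = j := by
      intro i hi j hj hp
      by_contra hij
      have hmem : tt (i, j) ∈ E :=
        Finset.mem_image.2 ⟨(i, j), Finset.mem_product.2 ⟨hi, hj⟩, rfl⟩
      have := congrFun hp ⟨tt (i, j), hmem⟩
      simp only [pat] at this
      have hd' := ht (i, j) hij
      simp only [tt, dif_pos hij] at this
      exact hd' this
    let g : (E → Bool) → M := fun b =>
      if h : ∃ i ∈ I, pat i = b then φ h.choose else hMne.some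
    have hg : ∀ i ∈ I, g (pat i) = φ i := by
      intro i hi
      have h : ∃ j ∈ I, pat j = pat i := ⟨i, hi, rfl⟩
      simp only [g, dif_pos h]
      obtain ⟨hj1, hj2⟩ := h.choose_spec
      rw [hpat _ hj1 _ hi hj2]
    refine ⟨s ⟨E, g⟩, ?_, Set.mem_range_self _⟩
    refine h2 ?_
    intro i hi
    have : s ⟨E, g⟩ i = f i (φ i) := by
      simp only [s]
      congr 1
      exact hg i hi
    rw [this]
    exact hφ' i hi
  · -- cardinality
    refine le_trans Cardinal.mk_range_le ?_
    have h1 : #Λ = Cardinal.sum (fun E : Finset M => #((E → Bool) → M)) :=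
      Cardinal.mk_sigma _
    have h2 : ∀ E : Finset M, #((E → Bool) → M) ≤ μ := by
      intro E
      have : #((E → Bool) → M) = #M ^ #(E → Bool) := by
        rw [Cardinal.mk_arrow, Cardinal.lift_id, Cardinal.lift_id]
      rw [this, hmkM]
      exact Cardinal.pow_le hμ (Cardinal.lt_aleph0_of_finite _)
    calc #Λ ≤ Cardinal.sum (fun _ : Finset M => μ) := by
            rw [h1]; exact Cardinal.sum_le_sum _ _ h2
      _ = #(Finset M) * μ := Cardinal.sum_const' _ _
      _ = μ * μ := by rw [Cardinal.mk_finset_of_infinite, hmkM]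
      _ = μ := Cardinal.mul_eq_self hμ
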